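/- arXiv:1105.4748 — 5 statements merged into one kernel-verified Lean document; each statement's English description precedes it below -/
import Mathlib

section
/- Let D_1,...,D_n be K-derivations of R = K[x_1,...,x_n] with D_i = sum_j a_{ij} ∂/∂x_j forming an R-basis of Der_K(R), and suppose [D_i,D_j] = sum_k c_{ij}^k D_k with all c_{ij}^k ∈ K (so the K-span L of the D_i is a Lie subalgebra). Then for any d ∈ L, the trace of the adjoint operator ad(d) on L equals minus the divergence of d: tr(ad d) = -div(d). -/
open MvPolynomial

private lemma deriv_sum_apply {K A M : Type*} [CommRing K] [CommRing A] [Algebra K A]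
    [AddCommMonoid M] [Module K M] [Module A M] {ι : Type*} (s : Finset ι)
    (D : ι → Derivation K A M) (p : A) : (∑ i ∈ s, D i) p = ∑ i ∈ s, D i p := by
  have : ⇑(∑ i ∈ s, D i) = ∑ i ∈ s, ⇑(D i) := map_sum Derivation.coeFnAddMonoidHom D s
  rw [this, Finset.sum_apply]

private lemma deriv_prod {K A : Type*} [CommRing K] [CommRing A] [Algebra K A]
    (d : Derivation K A A) {ι : Type*} [DecidableEq ι] (s : Finset ι) (f : ι → A) :
    d (∏ i ∈ s, f i) = ∑ i ∈ s, d (f i) * ∏ j ∈ s.erase i, f j := by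
  induction s using Finset.induction_on with
  | empty => simp
  | @insert a s ha ih =>
    rw [Finset.prod_insert ha, Derivation.leibniz, smul_eq_mul, smul_eq_mul, ih,
      Finset.sum_insert ha, Finset.erase_insert ha, Finset.mul_sum, add_comm]
    congr 1
    · exact mul_comm _ _
    · refine Finset.sum_congr rfl fun i hi => ?_
      rw [Finset.erase_insert_of_ne (fun h => ha (by rw [h]; exact hi)),
        Finset.prod_insert (fun h => ha (Finset.mem_of_mem_erase h))]
      ring

/-- Jacobi's formula for derivations: `d (det M) = tr (adj M * d M)`. -/
private lemma deriv_det {K A : Type*} [CommRing K] [CommRing A] [Algebra K A]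
    (d : Derivation K A A) {m : ℕ} (M : Matrix (Fin m) (Fin m) A) :
    d M.det = ∑ i, ∑ r, M.adjugate i r * d (M r i) := by
  have hcol : ∀ i : Fin m, ∑ r, M.adjugate i r * d (M r i)
      = (M.updateCol i fun r => d (M r i)).det := by
    intro i
    rw [← Matrix.cramer_apply, Matrix.cramer_eq_adjugate_mulVec]
    simp [Matrix.mulVec, dotProduct]
  simp_rw [hcol]
  rw [Matrix.det_apply', map_sum]
  have hterm : ∀ σ : Equiv.Perm (Fin m),
      d (Equiv.Perm.sign σ * ∏ j, M (σ j) j)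
        = ∑ i, Equiv.Perm.sign σ * (d (M (σ i) i) * ∏ j ∈ Finset.univ.erase i, M (σ j) j) := by
    intro σ
    rw [Derivation.leibniz, Derivation.map_intCast, smul_zero, add_zero, smul_eq_mul,
      deriv_prod, Finset.mul_sum]
  simp_rw [hterm]
  rw [Finset.sum_comm]
  refine Finset.sum_congr rfl fun i _ => ?_
  rw [Matrix.det_apply']
  refine Finset.sum_congr rfl fun σ _ => ?_
  congr 1
  rw [← Finset.mul_prod_erase _ _ (Finset.mem_univ i), Matrix.updateCol_apply, if_pos rfl]
  congr 1
  refine Finset.prod_congr rfl fun j hj => ?_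
  rw [Matrix.updateCol_apply, if_neg (Finset.ne_of_mem_erase hj)]

set_option linter.unnecessarySimpa false in
/-- A unit of a polynomial ring over a field is a (nonzero) constant. -/
private lemma unit_eq_C {K : Type*} [Field K] : ∀ {n : ℕ} (p : MvPolynomial (Fin n) K),
    IsUnit p → ∃ k : K, p = MvPolynomial.C k := by
  intro n
  induction n with
  | zero =>
    intro p _
    exact ⟨(isEmptyAlgEquiv K (Fin 0)) p, ((isEmptyAlgEquiv K (Fin 0)).symm_apply_eq.mpr rfl ▸
      by simpa using ((isEmptyAlgEquiv K (Fin 0)).symm_apply_apply p).symm)⟩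
  | succ n ih =>
    intro p hp
    have hq : IsUnit (finSuccEquiv K n p) := hp.map _
    obtain ⟨r, hr, hrq⟩ := Polynomial.isUnit_iff.mp hq
    obtain ⟨k, hk⟩ := ih r hr
    refine ⟨k, ?_⟩
    have h2 := congrArg (finSuccEquiv K n).symm hrq
    rw [AlgEquiv.symm_apply_apply] at h2
    rw [← h2, hk]
    show (finSuccEquiv K n).symm (Polynomial.C (MvPolynomial.C k)) = MvPolynomial.C k
    have h3 : (Polynomial.C (MvPolynomial.C k) : Polynomial (MvPolynomial (Fin n) K))
        = algebraMap K _ k := rfl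
    rw [h3, AlgEquiv.commutes, algebraMap_eq]

/-- Let `{D_1, ..., D_n}` be an `R`-basis of the module of `K`-derivations of
`R = K[x_1, ..., x_n]` with `D_i = ∑ j, a i j • ∂/∂x_j`, whose brackets satisfy
`⁅D i, D j⁆ = ∑ k, c i j k • D k` with constants `c i j k ∈ K` (so the `K`-span of
the `D i` is a Lie subalgebra `L`).  For any `d = ∑ i, lam i • D i ∈ L`, the trace of
`ad d` on `L` (computed in the basis `D`, namely `∑ j ∑ i, lam i * c i j j`) equals minus the
divergence of `d`. -/
theorem stmt1 (n : ℕ) (K : Type*) [Field K] [CharZero K]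
    (D : Fin n → Derivation K (MvPolynomial (Fin n) K) (MvPolynomial (Fin n) K))
    (a : Matrix (Fin n) (Fin n) (MvPolynomial (Fin n) K))
    (hD : ∀ i, D i = ∑ j, a i j • (pderiv j :
      Derivation K (MvPolynomial (Fin n) K) (MvPolynomial (Fin n) K)))
    (B : Module.Basis (Fin n) (MvPolynomial (Fin n) K)
      (Derivation K (MvPolynomial (Fin n) K) (MvPolynomial (Fin n) K)))
    (hB : ∀ i, B i = D i)
    (c : Fin n → Fin n → Fin n → K)
    (hc : ∀ i j, ⁅D i, D j⁆ = ∑ k, (MvPolynomial.C (c i j k) : MvPolynomial (Fin n) K) • D k)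
    (lam : Fin n → K) :
    MvPolynomial.C (∑ j, ∑ i, lam i * c i j j) =
      - ∑ j, pderiv j (∑ i, MvPolynomial.C (lam i) * a i j) := by
  classical
  -- evaluation of the `D j` on variables and on general polynomials
  have hval : ∀ j l, D j (X l) = a j l := by
    intro j l
    rw [hD j, deriv_sum_apply]
    simp [Derivation.smul_apply, pderiv_X, Pi.single_apply]
  have hDp : ∀ j p, D j p = ∑ m, a j m * pderiv m p := by
    intro j p
    rw [hD j, deriv_sum_apply]
    simp [Derivation.smul_apply, smul_eq_mul]
  -- the determinant of `a` is a unit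
  let e : Derivation K (MvPolynomial (Fin n) K) (MvPolynomial (Fin n) K)
      ≃ₗ[MvPolynomial (Fin n) K] (Fin n → MvPolynomial (Fin n) K) :=
    { toFun := fun d i => d (X i)
      map_add' := fun d₁ d₂ => rfl
      map_smul' := fun p d => rfl
      invFun := fun f => MvPolynomial.mkDerivation K f
      left_inv := fun d => MvPolynomial.derivation_ext fun i => mkDerivation_X K _ i
      right_inv := fun f => funext fun i => mkDerivation_X K f i }
  have hUnit : IsUnit a.det := by
    have h1 := (Pi.basisFun (MvPolynomial (Fin n) K) (Fin n)).isUnit_det (B.map e)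
    rw [Module.Basis.det_apply] at h1
    have h2 : (Pi.basisFun (MvPolynomial (Fin n) K) (Fin n)).toMatrix (B.map e) = a.transpose := by
      refine Matrix.ext fun i j => ?_
      rw [Module.Basis.toMatrix_apply, Pi.basisFun_repr, Module.Basis.map_apply, Matrix.transpose_apply]
      show (B j) (X i) = a j i
      rw [hB]; exact hval j i
    rw [h2, Matrix.det_transpose] at h1
    exact h1
  have hdet0 : ∀ d : Derivation K (MvPolynomial (Fin n) K) (MvPolynomial (Fin n) K),
      d a.det = 0 := by
    obtain ⟨k, hk⟩ := unit_eq_C a.det hUnit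
    intro d
    rw [hk, ← algebraMap_eq, Derivation.map_algebraMap]
  -- structure constants identity
  have hstar : ∀ i j l, D i (a j l) - D j (a i l) = ∑ k, MvPolynomial.C (c i j k) * a k l := by
    intro i j l
    have h := congrArg (fun E : Derivation K (MvPolynomial (Fin n) K) (MvPolynomial (Fin n) K)
      => E (X l)) (hc i j)
    beta_reduce at h
    rw [Derivation.commutator_apply, hval, hval, deriv_sum_apply] at h
    simpa [Derivation.smul_apply, smul_eq_mul, hval] using h
  -- adjugate identities
  have hadj : ∀ l m', (∑ j, a.adjugate l j * a j m') = if l = m' then a.det else 0 := by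
    intro l m'
    have h := congrFun (congrFun (Matrix.adjugate_mul a) l) m'
    rw [Matrix.mul_apply] at h
    simpa [Matrix.one_apply, mul_ite] using h
  have hadj2 : ∀ k j, (∑ l, a k l * a.adjugate l j) = if k = j then a.det else 0 := by
    intro k j
    have h := congrFun (congrFun (Matrix.mul_adjugate a) k) j
    rw [Matrix.mul_apply] at h
    simpa [Matrix.one_apply, mul_ite] using h
  -- `det a • ∂/∂x_l` as a combination of the `D j`
  have hpd : ∀ l p, ∑ j, a.adjugate l j * D j p = a.det * pderiv l p := by
    intro l p
    calc ∑ j, a.adjugate l j * D j p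
        = ∑ j, ∑ m', a.adjugate l j * (a j m' * pderiv m' p) := by
          refine Finset.sum_congr rfl fun j _ => ?_
          rw [hDp j p, Finset.mul_sum]
      _ = ∑ m', (∑ j, a.adjugate l j * a j m') * pderiv m' p := by
          rw [Finset.sum_comm]
          refine Finset.sum_congr rfl fun m' _ => ?_
          rw [Finset.sum_mul]
          exact Finset.sum_congr rfl fun j _ => by ring
      _ = a.det * pderiv l p := by
          simp_rw [hadj]
          simp
  -- the key pointwise identity
  have key : ∀ i, MvPolynomial.C (∑ j, c i j j) = -∑ j, pderiv j (a i j) := by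
    intro i
    have hS1 : ∑ j, ∑ l, (∑ k, MvPolynomial.C (c i j k) * a k l) * a.adjugate l j
        = a.det * MvPolynomial.C (∑ j, c i j j) := by
      have h1 : ∀ j, ∑ l, (∑ k, MvPolynomial.C (c i j k) * a k l) * a.adjugate l j
          = MvPolynomial.C (c i j j) * a.det := by
        intro j
        calc ∑ l, (∑ k, MvPolynomial.C (c i j k) * a k l) * a.adjugate l j
            = ∑ l, ∑ k, MvPolynomial.C (c i j k) * a k l * a.adjugate l j := by
              simp_rw [Finset.sum_mul]
          _ = ∑ k, ∑ l, MvPolynomial.C (c i j k) * a k l * a.adjugate l j :=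
              Finset.sum_comm
          _ = ∑ k, MvPolynomial.C (c i j k) * ∑ l, a k l * a.adjugate l j := by
              refine Finset.sum_congr rfl fun k _ => ?_
              rw [Finset.mul_sum]
              exact Finset.sum_congr rfl fun l _ => by ring
          _ = MvPolynomial.C (c i j j) * a.det := by
              simp_rw [hadj2]
              simp
      simp_rw [h1]
      rw [map_sum, Finset.mul_sum]
      exact Finset.sum_congr rfl fun j _ => by ring
    have hT1 : ∑ j, ∑ l, D i (a j l) * a.adjugate l j = 0 := by
      have h3 := deriv_det (D i) a
      rw [hdet0 (D i)] at h3
      calc ∑ j, ∑ l, D i (a j l) * a.adjugate l j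
          = ∑ l, ∑ j, a.adjugate l j * D i (a j l) := by
            rw [Finset.sum_comm]
            exact Finset.sum_congr rfl fun l _ =>
              Finset.sum_congr rfl fun j _ => mul_comm _ _
        _ = 0 := h3.symm
    have hT2 : ∑ j, ∑ l, D j (a i l) * a.adjugate l j = a.det * ∑ l, pderiv l (a i l) := by
      calc ∑ j, ∑ l, D j (a i l) * a.adjugate l j
          = ∑ l, ∑ j, a.adjugate l j * D j (a i l) := by
            rw [Finset.sum_comm]
            exact Finset.sum_congr rfl fun l _ =>
              Finset.sum_congr rfl fun j _ => mul_comm _ _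
        _ = ∑ l, a.det * pderiv l (a i l) :=
            Finset.sum_congr rfl fun l _ => hpd l (a i l)
        _ = a.det * ∑ l, pderiv l (a i l) := (Finset.mul_sum _ _ _).symm
    have hS2 : ∑ j, ∑ l, (∑ k, MvPolynomial.C (c i j k) * a k l) * a.adjugate l j
        = - (a.det * ∑ l, pderiv l (a i l)) := by
      have h2 : ∀ j l, (∑ k, MvPolynomial.C (c i j k) * a k l) * a.adjugate l j
          = D i (a j l) * a.adjugate l j - D j (a i l) * a.adjugate l j := by
        intro j l
        rw [← hstar, sub_mul]
      simp_rw [h2, Finset.sum_sub_distrib]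
      rw [hT1, hT2, zero_sub]
    have hfin : a.det * MvPolynomial.C (∑ j, c i j j)
        = a.det * (-∑ l, pderiv l (a i l)) := by
      rw [← hS1, hS2, mul_neg]
    exact mul_left_cancel₀ hUnit.ne_zero hfin
  -- assembling
  have hrhs : ∀ j, pderiv j (∑ i', MvPolynomial.C (lam i') * a i' j)
      = ∑ i', MvPolynomial.C (lam i') * pderiv j (a i' j) := by
    intro j
    rw [map_sum]
    exact Finset.sum_congr rfl fun i' _ => pderiv_C_mul
  calc MvPolynomial.C (∑ j, ∑ i', lam i' * c i' j j)
      = ∑ i', MvPolynomial.C (lam i') * MvPolynomial.C (∑ j, c i' j j) := by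
        rw [Finset.sum_comm, map_sum]
        refine Finset.sum_congr rfl fun i' _ => ?_
        rw [← Finset.mul_sum, map_mul]
    _ = ∑ i', MvPolynomial.C (lam i') * (-∑ j, pderiv j (a i' j)) :=
        Finset.sum_congr rfl fun i' _ => by rw [key i']
    _ = - ∑ j, pderiv j (∑ i', MvPolynomial.C (lam i') * a i' j) := by
        simp_rw [hrhs, mul_neg, Finset.mul_sum, ← Finset.sum_neg_distrib]
        exact Finset.sum_comm
end

section
/- If L is a basic Lie subalgebra of W_n(K) that is nilpotent as a Lie algebra, then every element D of L has divergence zero, i.e., L ⊆ SW_n(K). -/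
open MvPolynomial

lemma myDerivation_map_prod {R A : Type*} [CommRing R] [CommRing A] [Algebra R A]
    (D : Derivation R A A) {ι : Type*} [DecidableEq ι] (s : Finset ι) (f : ι → A) :
    D (∏ i ∈ s, f i) = ∑ i ∈ s, D (f i) * ∏ j ∈ s.erase i, f j := by
  induction s using Finset.induction_on with
  | empty => simp
  | insert a t ha ih =>
    rw [Finset.prod_insert ha, Derivation.leibniz, smul_eq_mul, smul_eq_mul, ih,
      Finset.sum_insert ha, Finset.erase_insert ha, Finset.mul_sum, add_comm]
    congr 1
    · ring
    · refine Finset.sum_congr rfl fun i hi => ?_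
      have hia : i ≠ a := fun h => ha (h ▸ hi)
      rw [Finset.erase_insert_of_ne hia.symm, Finset.prod_insert
        (fun h => ha (Finset.erase_subset _ _ h))]
      ring

lemma myDerivation_map_det {R A : Type*} [CommRing R] [CommRing A] [Algebra R A]
    {n : Type*} [DecidableEq n] [Fintype n]
    (D : Derivation R A A) (F : Matrix n n A) :
    D F.det = ∑ r, (F.updateRow r (fun j => D (F r j))).det := by
  simp only [Matrix.det_apply]
  rw [map_sum, Finset.sum_comm]
  refine Finset.sum_congr rfl fun σ _ => ?_
  rw [Units.smul_def, map_zsmul, ← Units.smul_def, myDerivation_map_prod,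
    ← Equiv.sum_comp σ (fun r => Equiv.Perm.sign σ •
      ∏ i, (F.updateRow r fun j => D (F r j)) (σ i) i), ← Finset.smul_sum]
  congr 1
  refine Finset.sum_congr rfl fun i _ => ?_
  rw [← Finset.mul_prod_erase Finset.univ _ (Finset.mem_univ i)]
  congr 1
  · rw [Matrix.updateRow_self]
  · refine Finset.prod_congr rfl fun k hk => ?_
    rw [Matrix.updateRow_ne]
    exact fun h => (Finset.ne_of_mem_erase hk) (σ.injective h)

lemma myMvPolynomial_isUnit_eq_C {K : Type*} [Field K] :
    ∀ {m : ℕ} {p : MvPolynomial (Fin m) K}, IsUnit p → ∃ c : K, p = C c := by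
  intro m
  induction m with
  | zero =>
    intro p _
    obtain ⟨c, rfl⟩ := C_surjective (Fin 0) p
    exact ⟨c, rfl⟩
  | succ m ih =>
    intro p hp
    have hq : IsUnit (finSuccEquiv K m p) := hp.map (finSuccEquiv K m)
    obtain ⟨r, hr, hrq⟩ := Polynomial.isUnit_iff.mp hq
    obtain ⟨c, rfl⟩ := ih hr
    refine ⟨c, ?_⟩
    have := congrArg (MvPolynomial.finSuccEquiv K m).symm hrq
    rw [AlgEquiv.symm_apply_apply] at this
    rw [← this]
    exact RingHom.congr_fun (finSuccEquiv_comp_C_eq_C m) c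

lemma myChainRule {K : Type*} [CommRing K] {n : ℕ}
    (E : Derivation K (MvPolynomial (Fin n) K) (MvPolynomial (Fin n) K))
    (p : MvPolynomial (Fin n) K) :
    E p = ∑ k, E (X k) * pderiv k p := by
  have h : E = ∑ k, E (X k) • (pderiv k :
      Derivation K (MvPolynomial (Fin n) K) (MvPolynomial (Fin n) K)) := by
    apply derivation_ext
    intro i
    have hs : ∀ q, (∑ k, E (X k) • (pderiv k :
        Derivation K (MvPolynomial (Fin n) K) (MvPolynomial (Fin n) K))) q
        = ∑ k, E (X k) * pderiv k q := by
      intro q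
      induction (Finset.univ : Finset (Fin n)) using Finset.induction_on with
      | empty => simp
      | insert _ _ ha ih => simp [Finset.sum_insert ha (ι := Fin n), Derivation.add_apply, ih]
    rw [hs]
    rw [Finset.sum_eq_single i (fun k _ hk => by rw [pderiv_X_of_ne (Ne.symm hk), mul_zero])
      (fun h => absurd (Finset.mem_univ i) h)]
    rw [pderiv_X_self, mul_one]
  conv_lhs => rw [h]
  induction (Finset.univ : Finset (Fin n)) using Finset.induction_on with
  | empty => simp
  | insert _ _ ha ih => simp [Finset.sum_insert ha (ι := Fin n), Derivation.add_apply, ih]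

noncomputable def myEquiv (K : Type*) [CommRing K] (n : ℕ) :
    Derivation K (MvPolynomial (Fin n) K) (MvPolynomial (Fin n) K) ≃ₗ[MvPolynomial (Fin n) K]
      (Fin n → MvPolynomial (Fin n) K) where
  toFun E := fun j => E (X j)
  map_add' E₁ E₂ := by funext j; simp
  map_smul' r E := by funext j; simp
  invFun f := mkDerivation K f
  left_inv E := derivation_ext fun i => by simp [mkDerivation_X]
  right_inv f := by funext j; simp [mkDerivation_X]

set_option maxHeartbeats 1000000

/-- If `L` is a basic Lie subalgebra of `W_n(K) = Der_K(K[x_1, ..., x_n])` (an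
`n`-dimensional Lie subalgebra every `K`-basis of which is a basis of the free
`R`-module of derivations) which is nilpotent as a Lie algebra, then every element
`D` of `L` has divergence zero: `∑ j, ∂(D x_j)/∂x_j = 0`. -/
theorem stmt2 (n : ℕ) (K : Type*) [Field K] [CharZero K]
    (L : LieSubalgebra K (Derivation K (MvPolynomial (Fin n) K) (MvPolynomial (Fin n) K)))
    (hdim : Module.finrank K L = n)
    (hbasic : ∀ v : Module.Basis (Fin n) K L,
      ∃ B : Module.Basis (Fin n) (MvPolynomial (Fin n) K)
        (Derivation K (MvPolynomial (Fin n) K) (MvPolynomial (Fin n) K)),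
      ∀ i, B i = (v i : Derivation K (MvPolynomial (Fin n) K) (MvPolynomial (Fin n) K)))
    (hnil : LieRing.IsNilpotent L)
    (D : Derivation K (MvPolynomial (Fin n) K) (MvPolynomial (Fin n) K)) (hD : D ∈ L) :
    ∑ j, pderiv j (D (X j)) = 0 := by
  rcases Nat.eq_zero_or_pos n with hn | hn
  · subst hn; simp
  haveI : FiniteDimensional K L := Module.finite_of_finrank_pos (by rw [hdim]; exact hn)
  let v : Module.Basis (Fin n) K L := Module.finBasisOfFinrankEq K L hdim
  obtain ⟨B, hB⟩ := hbasic v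
  let D' : L := ⟨D, hD⟩
  -- trace of ad D' is zero
  haveI := hnil
  have hnilad : IsNilpotent (LieAlgebra.ad K L D') :=
    LieModule.isNilpotent_toEnd_of_isNilpotent K L L D'
  have htr : LinearMap.trace K L ((LieAlgebra.ad K L D') : Module.End K L) = 0 :=
    (LinearMap.isNilpotent_trace_of_isNilpotent hnilad).eq_zero
  set C : Matrix (Fin n) (Fin n) K := fun i k => v.repr ⁅D', v i⁆ k with hCdef
  have htrC : ∑ i, C i i = 0 := by
    rw [LinearMap.trace_eq_matrix_trace K v] at htr
    rw [← htr, Matrix.trace]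
    refine Finset.sum_congr rfl fun i _ => ?_
    rw [Matrix.diag_apply, LinearMap.toMatrix_apply, LieAlgebra.ad_apply]
  -- the matrix F
  set F : Matrix (Fin n) (Fin n) (MvPolynomial (Fin n) K) := fun i j => (v i : Derivation K (MvPolynomial (Fin n) K) (MvPolynomial (Fin n) K)) (X j) with hFdef
  -- invertibility of F
  let P : Module.Basis (Fin n) (MvPolynomial (Fin n) K) (Derivation K (MvPolynomial (Fin n) K) (MvPolynomial (Fin n) K)) := Module.Basis.ofEquivFun (myEquiv K n)
  haveI hPB : Invertible (P.toMatrix ⇑B) := P.invertibleToMatrix B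
  have hPBF : P.toMatrix ⇑B = F.transpose := by
    ext i j
    rw [Module.Basis.toMatrix_apply, Module.Basis.ofEquivFun_repr_apply, hB]
    rfl
  have hFdet : IsUnit F.det := by
    rw [← Matrix.det_transpose, ← hPBF]
    exact Matrix.isUnit_det_of_invertible _
  haveI : Invertible F := Matrix.invertibleOfIsUnitDet F hFdet
  have hsum_apply : ∀ (f : Fin n → Derivation K (MvPolynomial (Fin n) K) (MvPolynomial (Fin n) K))
      (q : MvPolynomial (Fin n) K), (∑ k, f k) q = ∑ k, f k q := by
    intro f q
    induction (Finset.univ : Finset (Fin n)) using Finset.induction_on with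
    | empty => simp
    | insert _ _ ha ih => simp [Finset.sum_insert ha (ι := Fin n), Derivation.add_apply, ih]
  set g : Fin n → MvPolynomial (Fin n) K := fun j => D (X j) with hg
  have hbr : ∀ i j, D (F i j) = (∑ k, algebraMap K (MvPolynomial (Fin n) K) (C i k) * F k j)
      + (v i : Derivation K (MvPolynomial (Fin n) K) (MvPolynomial (Fin n) K)) (g j) := by
    intro i j
    have h1 : ((⁅D', v i⁆ : L) : Derivation K (MvPolynomial (Fin n) K) (MvPolynomial (Fin n) K))
        = ∑ k, C i k • ((v k : L) :
          Derivation K (MvPolynomial (Fin n) K) (MvPolynomial (Fin n) K)) := by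
      have h1' := congrArg (Submodule.subtype L.toSubmodule) (v.sum_repr ⁅D', v i⁆)
      rw [map_sum] at h1'
      simp only [map_smul] at h1'
      simpa [hCdef, Submodule.subtype_apply] using h1'.symm
    have h3 : ((⁅D', v i⁆ : L) :
        Derivation K (MvPolynomial (Fin n) K) (MvPolynomial (Fin n) K)) (X j)
        = D (F i j) - (v i : Derivation K (MvPolynomial (Fin n) K)
          (MvPolynomial (Fin n) K)) (g j) := by
      rw [LieSubalgebra.coe_bracket]
      rfl
    have h4 := congrArg (fun (E : Derivation K (MvPolynomial (Fin n) K)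
      (MvPolynomial (Fin n) K)) => E (X j)) h1
    rw [h3, hsum_apply] at h4
    have h5 : ∀ k, (C i k • ((v k : L) : Derivation K (MvPolynomial (Fin n) K)
        (MvPolynomial (Fin n) K))) (X j)
        = algebraMap K (MvPolynomial (Fin n) K) (C i k) * F k j := by
      intro k
      rw [Derivation.smul_apply, Algebra.smul_def]
    rw [Finset.sum_congr rfl (fun k _ => h5 k)] at h4
    exact sub_eq_iff_eq_add.mp h4
  set M : Matrix (Fin n) (Fin n) (MvPolynomial (Fin n) K) := fun k j => pderiv k (g j) with hM
  set G : Matrix (Fin n) (Fin n) (MvPolynomial (Fin n) K) := fun i j =>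
    (v i : Derivation K (MvPolynomial (Fin n) K) (MvPolynomial (Fin n) K)) (g j) with hGdef
  have hG : G = F * M := by
    funext i j
    rw [Matrix.mul_apply]
    exact myChainRule _ _
  set N := G * ⅟F with hN
  have hNF : N * F = G := by
    rw [hN, Matrix.mul_assoc, invOf_mul_self, Matrix.mul_one]
  set Cp := C.map (algebraMap K (MvPolynomial (Fin n) K)) with hCp
  have hrow : ∀ i, (fun j => D (F i j)) = ∑ k, (Cp + N) i k • F k := by
    intro i; funext j
    rw [Finset.sum_apply]
    simp only [Pi.smul_apply, smul_eq_mul, Matrix.add_apply]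
    rw [hbr i j]
    have hGij : (v i : Derivation K (MvPolynomial (Fin n) K)
        (MvPolynomial (Fin n) K)) (g j) = ∑ k, N i k * F k j := by
      rw [← Matrix.mul_apply, hNF]
    rw [hGij, ← Finset.sum_add_distrib]
    refine Finset.sum_congr rfl fun k _ => ?_
    rw [hCp, Matrix.map_apply]
    ring
  have hdet : D F.det = (∑ i, (Cp + N) i i) * F.det := by
    rw [myDerivation_map_det]
    calc ∑ r, (F.updateRow r fun j => D (F r j)).det
        = ∑ r, ((Cp + N) r r • F.det) := by
          refine Finset.sum_congr rfl fun r _ => ?_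
          rw [hrow r, Matrix.det_updateRow_sum]
      _ = _ := by rw [← Finset.sum_smul, smul_eq_mul]
  have hdet0 : D F.det = 0 := by
    obtain ⟨c, hc⟩ := myMvPolynomial_isUnit_eq_C hFdet
    rw [hc]
    exact derivation_C _ _
  have hdiag : (∑ i, (Cp + N) i i) = 0 := by
    rcases mul_eq_zero.mp (hdet.symm.trans hdet0) with h | h
    · exact h
    · exact absurd h hFdet.ne_zero
  have htrCp : ∑ i, Cp i i = 0 := by
    simp only [hCp, Matrix.map_apply]
    rw [← map_sum, htrC, map_zero]
  have htrN : ∑ i, N i i = 0 := by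
    simp only [Matrix.add_apply] at hdiag
    rw [Finset.sum_add_distrib, htrCp, zero_add] at hdiag
    exact hdiag
  have htrM : ∑ j, M j j = ∑ i, N i i := by
    have h : Matrix.trace N = Matrix.trace M := by
      rw [hN, Matrix.trace_mul_comm, hG, ← Matrix.mul_assoc, invOf_mul_self,
        Matrix.one_mul]
    simpa [Matrix.trace, Matrix.diag] using h.symm
  calc ∑ j, pderiv j (D (X j)) = ∑ j, M j j := rfl
    _ = 0 := by rw [htrM, htrN]
end

section
/- Let {D_1,...,D_n} be an R-basis of Der_K(R) and define b_{pj} ∈ R by ∂/∂x_p = sum_j b_{pj} D_j. If elements c_{ij}^k ∈ R satisfy sum_{i,j} b_{pi} b_{qj} c_{ij}^k + ∂b_{qk}/∂x_p - ∂b_{pk}/∂x_q = 0 for all p,q,k, then [D_i, D_j] = sum_k c_{ij}^k D_k. -/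
open MvPolynomial

section AuxStmt5

variable {n : ℕ} {K : Type*} [Field K] [CharZero K]

theorem auxDerSumApply5 {ι : Type*} (s : Finset ι)
    (f : ι → Derivation K (MvPolynomial (Fin n) K) (MvPolynomial (Fin n) K))
    (a : MvPolynomial (Fin n) K) :
    (∑ j ∈ s, f j) a = ∑ j ∈ s, f j a := by
  have h : ⇑(∑ j ∈ s, f j) = ∑ j ∈ s, ⇑(f j) := map_sum Derivation.coeFnAddMonoidHom f s
  rw [h, Finset.sum_apply]

theorem auxDerEq5 (E : Derivation K (MvPolynomial (Fin n) K) (MvPolynomial (Fin n) K))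
    (f : MvPolynomial (Fin n) K) :
    E f = ∑ p, E (X p) * pderiv p f := by
  classical
  have h : E = ∑ p, E (X p) • (pderiv p :
      Derivation K (MvPolynomial (Fin n) K) (MvPolynomial (Fin n) K)) := by
    apply derivation_ext
    intro i
    rw [auxDerSumApply5]
    simp [Derivation.smul_apply, Pi.single_apply, Finset.sum_ite_eq]
  conv_lhs => rw [h]
  rw [auxDerSumApply5]
  simp [Derivation.smul_apply]

end AuxStmt5

/-- Let `{D_1, ..., D_n}` be an `R`-basis of the module of `K`-derivations of
`R = K[x_1, ..., x_n]` and define `b p j ∈ R` by `∂/∂x_p = ∑ j, b p j • D j`.  If elements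
`c i j k ∈ R` satisfy `∑_{i,j} b p i * b q j * c i j k + ∂(b q k)/∂x_p - ∂(b p k)/∂x_q = 0`
for all `p, q, k`, then `⁅D i, D j⁆ = ∑ k, c i j k • D k`. -/
theorem stmt5 (n : ℕ) (K : Type*) [Field K] [CharZero K]
    (D : Fin n → Derivation K (MvPolynomial (Fin n) K) (MvPolynomial (Fin n) K))
    (B : Module.Basis (Fin n) (MvPolynomial (Fin n) K)
      (Derivation K (MvPolynomial (Fin n) K) (MvPolynomial (Fin n) K)))
    (hB : ∀ i, B i = D i)
    (b : Fin n → Fin n → MvPolynomial (Fin n) K)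
    (hb : ∀ p, (pderiv p :
        Derivation K (MvPolynomial (Fin n) K) (MvPolynomial (Fin n) K)) =
      ∑ j, b p j • D j)
    (c : Fin n → Fin n → Fin n → MvPolynomial (Fin n) K)
    (hc : ∀ p q k, (∑ i, ∑ j, b p i * b q j * c i j k)
      + pderiv p (b q k) - pderiv q (b p k) = 0) :
    ∀ i j, ⁅D i, D j⁆ = ∑ k, c i j k • D k := by
  classical
  set d : Fin n → Fin n → MvPolynomial (Fin n) K := fun i m => D i (X m) with hd
  set Mb : Matrix (Fin n) (Fin n) (MvPolynomial (Fin n) K) := Matrix.of b with hMb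
  set Md : Matrix (Fin n) (Fin n) (MvPolynomial (Fin n) K) := Matrix.of d with hMd
  have hbd : Mb * Md = 1 := by
    ext p k
    have h1 := congrArg (fun (E : Derivation K (MvPolynomial (Fin n) K)
      (MvPolynomial (Fin n) K)) => E (X k)) (hb p)
    simp only [auxDerSumApply5, Derivation.smul_apply, smul_eq_mul] at h1
    simp only [Matrix.mul_apply, Matrix.one_apply, hMb, hMd, Matrix.of_apply]
    rw [← h1]
    by_cases h : p = k
    · simp [h]
    · simp [h, pderiv_X_of_ne (Ne.symm h)]
  have hdb : Md * Mb = 1 := mul_eq_one_comm.mp hbd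
  have hdb' : ∀ j k, (∑ q, d j q * b q k) = if j = k then 1 else 0 := by
    intro j k
    have h := congrFun (congrFun hdb j) k
    simpa [Matrix.mul_apply, Matrix.one_apply, hMb, hMd, Matrix.of_apply] using h
  have hbd' : ∀ p m, (∑ k, b p k * d k m) = if p = m then 1 else 0 := by
    intro p m
    have h := congrFun (congrFun hbd p) m
    simpa [Matrix.mul_apply, Matrix.one_apply, hMb, hMd, Matrix.of_apply] using h
  have hder : ∀ p q m,
      ∑ k, (pderiv q (b p k) * d k m + b p k * pderiv q (d k m)) = 0 := by
    intro p q m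
    have h2 := congrArg (⇑(pderiv (R := K) q)) (hbd' p m)
    rw [map_sum] at h2
    have h3 : (pderiv (R := K) q) ((if p = m then 1 else 0 : MvPolynomial (Fin n) K)) = 0 := by
      split_ifs <;> simp
    rw [h3] at h2
    rw [← h2]
    apply Finset.sum_congr rfl
    intro k _
    rw [Derivation.leibniz]
    simp only [smul_eq_mul]
    ring
  have hck : ∀ s t k, c s t k =
      ∑ p, ∑ q, d s p * d t q * (pderiv q (b p k) - pderiv p (b q k)) := by
    intro s t k
    set Ck : Matrix (Fin n) (Fin n) (MvPolynomial (Fin n) K) :=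
      Matrix.of (fun i j => c i j k) with hCk
    set Ek : Matrix (Fin n) (Fin n) (MvPolynomial (Fin n) K) :=
      Matrix.of (fun p q => pderiv q (b p k) - pderiv p (b q k)) with hEk
    have hMC : Mb * Ck * Mb.transpose = Ek := by
      refine Matrix.ext fun p q => ?_
      simp only [Matrix.mul_apply, Matrix.transpose_apply, hCk, hEk, hMb, Matrix.of_apply]
      have hlhs : ∑ j, (∑ i, b p i * c i j k) * b q j
          = ∑ i, ∑ j, b p i * b q j * c i j k := by
        rw [Finset.sum_comm]
        apply Finset.sum_congr rfl; intro i _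
        rw [Finset.sum_mul]
        apply Finset.sum_congr rfl; intro j _; ring
      rw [hlhs]
      linear_combination hc p q k
    have hCkeq : Ck = Md * Ek * Md.transpose := by
      have h1 : Mb.transpose * Md.transpose = 1 := by
        rw [← Matrix.transpose_mul, hdb, Matrix.transpose_one]
      calc Ck = (Md * Mb) * Ck * (Mb.transpose * Md.transpose) := by
            rw [hdb, h1, Matrix.one_mul, Matrix.mul_one]
        _ = Md * (Mb * Ck * Mb.transpose) * Md.transpose := by noncomm_ring
        _ = Md * Ek * Md.transpose := by rw [hMC]
    have h := congrFun (congrFun hCkeq s) t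
    simp only [Matrix.mul_apply, Matrix.transpose_apply, hCk, hEk, hMd, Matrix.of_apply] at h
    rw [h]
    rw [Finset.sum_comm]
    apply Finset.sum_congr rfl; intro p _
    rw [Finset.sum_mul]
    apply Finset.sum_congr rfl; intro q _
    ring
  intro i j
  apply derivation_ext
  intro m
  have hRHS : (∑ k, c i j k • D k) (X m) = ∑ k, c i j k * d k m := by
    rw [auxDerSumApply5]
    simp only [Derivation.smul_apply, smul_eq_mul, hd]
  rw [hRHS, Derivation.commutator_apply]
  have hLi : D i ((D j) (X m)) = ∑ p, d i p * pderiv p (d j m) := by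
    rw [auxDerEq5]
  have hLj : D j ((D i) (X m)) = ∑ q, d j q * pderiv q (d i m) := by
    rw [auxDerEq5]
  rw [hLi, hLj]
  -- the key computation
  have e1 : ∑ k, c i j k * d k m
      = ∑ p, ∑ q, ∑ k, d i p * d j q * ((pderiv q (b p k) - pderiv p (b q k)) * d k m) := by
    calc ∑ k, c i j k * d k m
        = ∑ k, ∑ p, ∑ q, d i p * d j q * ((pderiv q (b p k) - pderiv p (b q k)) * d k m) := by
          apply Finset.sum_congr rfl; intro k _
          rw [hck i j k, Finset.sum_mul]
          apply Finset.sum_congr rfl; intro p _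
          rw [Finset.sum_mul]
          apply Finset.sum_congr rfl; intro q _
          ring
      _ = _ := by
          rw [Finset.sum_comm]
          apply Finset.sum_congr rfl; intro p _
          rw [Finset.sum_comm]
  have e2 : ∀ p q, ∑ k, ((pderiv q (b p k) - pderiv p (b q k)) * d k m)
      = ∑ k, (b q k * pderiv p (d k m) - b p k * pderiv q (d k m)) := by
    intro p q
    have h1 := hder p q m
    have h2 := hder q p m
    rw [Finset.sum_add_distrib] at h1 h2
    have h1' : ∑ k, pderiv q (b p k) * d k m = - ∑ k, b p k * pderiv q (d k m) :=
      eq_neg_of_add_eq_zero_left h1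
    have h2' : ∑ k, pderiv p (b q k) * d k m = - ∑ k, b q k * pderiv p (d k m) :=
      eq_neg_of_add_eq_zero_left h2
    simp only [sub_mul, Finset.sum_sub_distrib]
    rw [h1', h2']
    ring
  have e3 : ∑ k, c i j k * d k m
      = ∑ p, ∑ q, ∑ k, d i p * d j q * (b q k * pderiv p (d k m) - b p k * pderiv q (d k m)) := by
    rw [e1]
    apply Finset.sum_congr rfl; intro p _
    apply Finset.sum_congr rfl; intro q _
    rw [← Finset.mul_sum, e2 p q, Finset.mul_sum]
  rw [e3]
  have hterm : ∀ p q k,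
      d i p * d j q * (b q k * pderiv p (d k m) - b p k * pderiv q (d k m))
      = d i p * (d j q * b q k) * pderiv p (d k m)
        - d j q * (d i p * b p k) * pderiv q (d k m) := by
    intro p q k; ring
  simp only [hterm, Finset.sum_sub_distrib]
  have hswap : (∑ p, ∑ q, ∑ k, d j q * (d i p * b p k) * pderiv q (d k m))
      = ∑ q, ∑ p, ∑ k, d j q * (d i p * b p k) * pderiv q (d k m) := Finset.sum_comm
  rw [hswap]
  have tA : ∀ p, ∑ q, ∑ k, d i p * (d j q * b q k) * pderiv p (d k m)
      = d i p * pderiv p (d j m) := by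
    intro p
    rw [Finset.sum_comm]
    have h : ∀ k, ∑ q, d i p * (d j q * b q k) * pderiv p (d k m)
        = (∑ q, d j q * b q k) * (d i p * pderiv p (d k m)) := by
      intro k; rw [Finset.sum_mul]; apply Finset.sum_congr rfl; intro q _; ring
    rw [Finset.sum_congr rfl (fun k _ => h k)]
    simp only [hdb', ite_mul, one_mul, zero_mul]
    rw [Finset.sum_ite_eq]
    simp [mul_assoc]
  have tB : ∀ q, ∑ p, ∑ k, d j q * (d i p * b p k) * pderiv q (d k m)
      = d j q * pderiv q (d i m) := by
    intro q
    rw [Finset.sum_comm]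
    have h : ∀ k, ∑ p, d j q * (d i p * b p k) * pderiv q (d k m)
        = (∑ p, d i p * b p k) * (d j q * pderiv q (d k m)) := by
      intro k; rw [Finset.sum_mul]; apply Finset.sum_congr rfl; intro p _; ring
    rw [Finset.sum_congr rfl (fun k _ => h k)]
    simp only [hdb', ite_mul, one_mul, zero_mul]
    rw [Finset.sum_ite_eq]
    simp [mul_assoc]
  rw [Finset.sum_congr rfl (fun p _ => tA p), Finset.sum_congr rfl (fun q _ => tB q)]
end

section
/- Let L be a finite-dimensional nilpotent Lie algebra of dimension n over K (char 0), R = K[x_1,...,x_n], and w̄ = sum_i w_i ⊗ l_i ∈ R ⊗_K L with det of the Jacobian matrix J(w_1,...,w_n) equal to a nonzero constant c ∈ K*. Define b̄_p = sum_{i≥1} (1/i!) (ad w̄)^{i-1}(∂w̄/∂x_p) for p = 1,...,n, where ∂w̄/∂x_p = sum_i (∂w_i/∂x_p) ⊗ l_i. Then {b̄_1,...,b̄_n} is a basis of the free R-module R ⊗_K L, and writing b̄_p = sum_i b_{pi} ⊗ l_i, det(b_{pi}) = c ∈ K*. -/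
open scoped TensorProduct
open MvPolynomial

open scoped Matrix

set_option maxHeartbeats 1000000

theorem det_one_add_of_isNilpotent' {R : Type*} [CommRing R] [IsDomain R]
    {n : Type*} [Fintype n] [DecidableEq n] {N : Matrix n n R} (h : IsNilpotent N) :
    (1 + N).det = 1 := by
  have hchar : N.charpoly = Polynomial.X ^ Fintype.card n := by
    have h2 := Matrix.isNilpotent_charpoly_sub_pow_of_isNilpotent h
    exact sub_eq_zero.mp h2.eq_zero
  have h1 : Polynomial.eval (-1 : R) N.charpoly = ((Matrix.scalar n (-1)) - N).det := by
    rw [Matrix.charpoly, _root_.eval_det, Matrix.matPolyEquiv_charmatrix]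
    congr 1
    simp
  rw [hchar] at h1
  have hsc : (Matrix.scalar n (-1) : Matrix n n R) - N = -(1 + N) := by
    rw [map_neg, _root_.map_one]; abel
  rw [hsc, Matrix.det_neg] at h1
  simp only [Polynomial.eval_pow, Polynomial.eval_neg, Polynomial.eval_one] at h1
  have hne : ((-1 : R) ^ Fintype.card n) ≠ 0 := by
    simp
  rw [Polynomial.eval_X] at h1
  exact mul_left_cancel₀ hne (h1.symm.trans (mul_one _).symm)


/-- Let `L` be a nilpotent Lie algebra of dimension `n` over a field `K` of characteristic
zero with basis `l_1, ..., l_n`, let `R = K[x_1, ..., x_n]`, and let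
`w̄ = ∑ i, w i ⊗ l i ∈ R ⊗[K] L` with Jacobian determinant `det (∂w_i/∂x_j) = C c`, `c ∈ K*`.
Define `b̄_p = ∑_{i ≥ 1} (1/i!) (ad w̄)^(i-1) (∂w̄/∂x_p)` (a finite sum since `ad w̄` is
nilpotent, say `(ad w̄)^m = 0`).  Then `{b̄_1, ..., b̄_n}` is a basis of the free `R`-module
`R ⊗[K] L` and, writing `b̄_p = ∑ i, b p i ⊗ l i`, we have `det (b p i) = C c`. -/
theorem stmt10 (n : ℕ) (K L : Type*) [Field K] [CharZero K]
    [LieRing L] [LieAlgebra K L]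
    (l : Module.Basis (Fin n) K L)
    (hnil : LieRing.IsNilpotent L)
    (w : Fin n → MvPolynomial (Fin n) K) (c : K) (hc : c ≠ 0)
    (hJac : (Matrix.det (fun i j => pderiv j (w i))) = MvPolynomial.C c)
    (wbar : (MvPolynomial (Fin n) K) ⊗[K] L)
    (hwbar : wbar = ∑ i, w i ⊗ₜ[K] l i)
    (m : ℕ)
    (hm : (LieAlgebra.ad (MvPolynomial (Fin n) K)
      ((MvPolynomial (Fin n) K) ⊗[K] L) wbar) ^ m = 0)
    (bbar : Fin n → (MvPolynomial (Fin n) K) ⊗[K] L)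
    (hbbar : ∀ p, bbar p = ∑ i ∈ Finset.range m,
      ((MvPolynomial.C (((Nat.factorial (i + 1) : K))⁻¹) : MvPolynomial (Fin n) K)) •
        (((LieAlgebra.ad (MvPolynomial (Fin n) K)
          ((MvPolynomial (Fin n) K) ⊗[K] L) wbar) ^ i)
          (∑ j, (pderiv p (w j)) ⊗ₜ[K] l j))) :
    ∃ (B : Module.Basis (Fin n) (MvPolynomial (Fin n) K) ((MvPolynomial (Fin n) K) ⊗[K] L))
      (b : Matrix (Fin n) (Fin n) (MvPolynomial (Fin n) K)),
      (∀ p, B p = bbar p) ∧ (∀ p, bbar p = ∑ i, b p i ⊗ₜ[K] l i) ∧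
        b.det = MvPolynomial.C c := by
  classical
  let R := MvPolynomial (Fin n) K
  let M := R ⊗[K] L
  let e : Module.Basis (Fin n) R M := l.baseChange R
  let ad : Module.End R M := LieAlgebra.ad R M wbar
  let φ : Module.End R M :=
    ∑ i ∈ Finset.range m,
      ((MvPolynomial.C (((Nat.factorial (i + 1) : K))⁻¹) : R)) • ad ^ i
  have hbphi : ∀ p, bbar p = φ (∑ j, (pderiv p (w j)) ⊗ₜ[K] l j) := by
    intro p
    rw [hbbar p, LinearMap.sum_apply]
    exact Finset.sum_congr rfl fun i _ => rfl
  -- n = 0 trivial case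
  rcases Nat.eq_zero_or_pos n with hn | hn
  · subst hn
    refine ⟨e, 1, fun p => Fin.elim0 p, fun p => Fin.elim0 p, ?_⟩
    rw [Matrix.det_isEmpty, ← hJac]; exact Matrix.det_isEmpty.symm
  -- m cannot be 0
  rcases Nat.eq_zero_or_pos m with hm0 | hm1
  · exfalso
    subst hm0
    rw [pow_zero] at hm
    have hne := e.ne_zero ⟨0, hn⟩
    apply hne
    have h0 : (1 : Module.End R M) (e ⟨0, hn⟩) = 0 := by rw [hm]; rfl
    simpa using h0
  -- φ = 1 + nilpotent
  obtain ⟨k, rfl⟩ : ∃ k, m = k + 1 := ⟨m - 1, (Nat.succ_pred_eq_of_pos hm1).symm⟩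
  let N : Module.End R M :=
    ∑ i ∈ Finset.range k,
      ((MvPolynomial.C (((Nat.factorial (i + 2) : K))⁻¹) : R)) • ad ^ (i + 1)
  have hφN : φ = N + 1 := by
    show ∑ i ∈ Finset.range (k+1), _ = _
    rw [Finset.sum_range_succ']
    congr 1
    simp
  have hNnil : IsNilpotent N := by
    have h1 : N = ad * ∑ i ∈ Finset.range k,
        ((MvPolynomial.C (((Nat.factorial (i + 2) : K))⁻¹) : R)) • ad ^ i := by
      rw [Finset.mul_sum]
      refine Finset.sum_congr rfl fun i _ => ?_
      rw [mul_smul_comm, ← pow_succ']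
    rw [h1]
    refine Commute.isNilpotent_mul_right ?_ ⟨k + 1, hm⟩
    apply Commute.sum_right
    intro i _
    exact ((Commute.refl ad).pow_right i).smul_right _
  -- matrices
  let Φ : Matrix (Fin n) (Fin n) R := LinearMap.toMatrix e e φ
  have hdetΦ : Φ.det = 1 := by
    have hΦ1 : Φ = 1 + LinearMap.toMatrix e e N := by
      show LinearMap.toMatrix e e φ = _
      rw [hφN, map_add, add_comm]
      congr 1
      simp
    rw [hΦ1]
    apply det_one_add_of_isNilpotent'
    exact hNnil.map (LinearMap.toMatrixAlgEquiv e).toRingHom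
  let J : Matrix (Fin n) (Fin n) R := Matrix.of fun p j => pderiv p (w j)
  have hdetJ : J.det = MvPolynomial.C c := by
    have hJt : J = (Matrix.of fun i j => pderiv j (w i))ᵀ := rfl
    rw [hJt, Matrix.det_transpose]
    exact hJac
  let b : Matrix (Fin n) (Fin n) R := J * Φᵀ
  have hdetb : b.det = MvPolynomial.C c := by
    show (J * Φᵀ).det = _
    rw [Matrix.det_mul, Matrix.det_transpose, hdetΦ, hdetJ, mul_one]
  -- coordinates of bbar
  have hcoord : ∀ p, bbar p = ∑ i, b p i • e i := by
    intro p
    rw [hbphi p]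
    have hv : (∑ j, (pderiv p (w j)) ⊗ₜ[K] l j) = ∑ j, J p j • e j := by
      refine Finset.sum_congr rfl fun j _ => ?_
      rw [Module.Basis.baseChange_apply, TensorProduct.smul_tmul', smul_eq_mul, mul_one]
      rfl
    rw [hv, map_sum]
    have hφe : ∀ j, φ (e j) = ∑ i, Φ i j • e i := by
      intro j
      conv_lhs => rw [← Matrix.toLin_toMatrix e e φ]
      set_option maxRecDepth 10000 in
      exact Matrix.toLin_self e e (LinearMap.toMatrix e e φ) j
    simp_rw [_root_.map_smul, hφe, Finset.smul_sum, smul_smul]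
    rw [Finset.sum_comm]
    refine Finset.sum_congr rfl fun i _ => ?_
    rw [← Finset.sum_smul]
    congr 1
  have hcoord' : ∀ p, bbar p = ∑ i, b p i ⊗ₜ[K] l i := by
    intro p
    rw [hcoord p]
    refine Finset.sum_congr rfl fun i _ => ?_
    rw [Module.Basis.baseChange_apply, TensorProduct.smul_tmul', smul_eq_mul, mul_one]
  -- the basis
  have hdetbT : IsUnit (bᵀ).det := by
    rw [Matrix.det_transpose, hdetb]
    exact (isUnit_iff_ne_zero.mpr hc).map (MvPolynomial.C : K →+* R)
  refine ⟨e.map (Matrix.toLinearEquiv e bᵀ hdetbT), b, ?_, hcoord', hdetb⟩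
  intro p
  rw [Module.Basis.map_apply, Matrix.toLinearEquiv_apply, Matrix.toLin_self, hcoord p]
  rfl
end

section
/- In W_3(K) = Der_K(K[x_1,x_2,x_3]) with K a field of characteristic 0, the derivations E = -x_3 ∂/∂x_1 + (1 + 2x_2x_3) ∂/∂x_2 - x_3² ∂/∂x_3, H = ∂/∂x_1 - 2x_2 ∂/∂x_2 + 2x_3 ∂/∂x_3, F = ∂/∂x_3 satisfy [H,E] = 2E, [H,F] = -2F, [E,F] = H; hence their K-span is a Lie subalgebra isomorphic to sl_2(K), and {E, H, F} is a basis of the free K[x_1,x_2,x_3]-module W_3(K). -/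
open MvPolynomial

section Aux

noncomputable def derivEquivFun (K : Type*) [Field K] :
    Derivation K (MvPolynomial (Fin 3) K) (MvPolynomial (Fin 3) K) ≃ₗ[MvPolynomial (Fin 3) K]
      (Fin 3 → MvPolynomial (Fin 3) K) where
  toFun D := fun i => D (X i)
  map_add' _ _ := rfl
  map_smul' _ _ := rfl
  invFun f := mkDerivation K f
  left_inv _ := MvPolynomial.derivation_ext fun i => mkDerivation_X K _ i
  right_inv f := funext fun i => mkDerivation_X K f i

@[simp] lemma derivEquivFun_apply {K : Type*} [Field K]
    (D : Derivation K (MvPolynomial (Fin 3) K) (MvPolynomial (Fin 3) K)) (i : Fin 3) :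
    derivEquivFun K D i = D (X i) := rfl

private lemma app3 {K : Type*} [Field K] (p q r f : MvPolynomial (Fin 3) K) :
    ((p • pderiv 0 + q • pderiv 1 + r • pderiv 2 :
      Derivation K (MvPolynomial (Fin 3) K) (MvPolynomial (Fin 3) K))) f
      = p * pderiv 0 f + q * pderiv 1 f + r * pderiv 2 f := by
  simp [smul_eq_mul]

private lemma fmk0 (h : 0 < 3) : (⟨0, h⟩ : Fin 3) = 0 := rfl
private lemma fmk1 (h : 1 < 3) : (⟨1, h⟩ : Fin 3) = 1 := rfl
private lemma fmk2 (h : 2 < 3) : (⟨2, h⟩ : Fin 3) = 2 := rfl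

private lemma p2 {K : Type*} [Field K] (i : Fin 3) :
    pderiv i (2 : MvPolynomial (Fin 3) K) = 0 := by
  rw [← one_add_one_eq_two, map_add, pderiv_one, add_zero]

private lemma p00 {K : Type*} [Field K] :
    pderiv (0 : Fin 3) (X 0 : MvPolynomial (Fin 3) K) = 1 := pderiv_X_self 0
private lemma p11 {K : Type*} [Field K] :
    pderiv (1 : Fin 3) (X 1 : MvPolynomial (Fin 3) K) = 1 := pderiv_X_self 1
private lemma p22 {K : Type*} [Field K] :
    pderiv (2 : Fin 3) (X 2 : MvPolynomial (Fin 3) K) = 1 := pderiv_X_self 2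
private lemma p01 {K : Type*} [Field K] :
    pderiv (0 : Fin 3) (X 1 : MvPolynomial (Fin 3) K) = 0 := pderiv_X_of_ne (by decide)
private lemma p02 {K : Type*} [Field K] :
    pderiv (0 : Fin 3) (X 2 : MvPolynomial (Fin 3) K) = 0 := pderiv_X_of_ne (by decide)
private lemma p10 {K : Type*} [Field K] :
    pderiv (1 : Fin 3) (X 0 : MvPolynomial (Fin 3) K) = 0 := pderiv_X_of_ne (by decide)
private lemma p12 {K : Type*} [Field K] :
    pderiv (1 : Fin 3) (X 2 : MvPolynomial (Fin 3) K) = 0 := pderiv_X_of_ne (by decide)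
private lemma p20 {K : Type*} [Field K] :
    pderiv (2 : Fin 3) (X 0 : MvPolynomial (Fin 3) K) = 0 := pderiv_X_of_ne (by decide)
private lemma p21 {K : Type*} [Field K] :
    pderiv (2 : Fin 3) (X 1 : MvPolynomial (Fin 3) K) = 0 := pderiv_X_of_ne (by decide)

open LieAlgebra.SpecialLinear in
theorem aux_sl2 {K : Type*} [Field K] {L : Type*} [LieRing L] [LieAlgebra K L]
    (E H F : L) (hHE : ⁅H, E⁆ = (2:K) • E) (hHF : ⁅H, F⁆ = -((2:K) • F)) (hEF : ⁅E, F⁆ = H)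
    (hind : ∀ a b c : K, a • E + b • H + c • F = 0 → a = 0 ∧ b = 0 ∧ c = 0) :
    ∃ S : LieSubalgebra K L, S.toSubmodule = Submodule.span K {E, H, F} ∧
      Nonempty (sl (Fin 2) K ≃ₗ⁅K⁆ S) := by
  have mem_sl : ∀ (A : Matrix (Fin 2) (Fin 2) K), Matrix.trace A = 0 → A ∈ sl (Fin 2) K :=
    fun A h => h
  have tr_eq : ∀ A : sl (Fin 2) K, A.val 1 1 = -(A.val 0 0) := by
    intro A
    have h : Matrix.trace A.val = 0 := A.2
    rw [Matrix.trace_fin_two] at h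
    linear_combination h
  have hEH : ⁅E, H⁆ = -((2:K) • E) := by rw [← lie_skew E H, hHE]
  have hFH : ⁅F, H⁆ = (2:K) • F := by rw [← lie_skew F H, hHF, neg_neg]
  have hFE : ⁅F, E⁆ = -H := by rw [← lie_skew F E, hEF]
  have hadd : ∀ A B : sl (Fin 2) K, (A + B).val = A.val + B.val := fun _ _ => rfl
  have hsmul : ∀ (t : K) (A : sl (Fin 2) K), (t • A).val = t • A.val := fun _ _ => rfl
  let φ : (sl (Fin 2) K) →ₗ⁅K⁆ L :=
    { toFun := fun A => A.val 0 0 • H + A.val 0 1 • E + A.val 1 0 • F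
      map_add' := by
        intro A B
        simp only [hadd, Matrix.add_apply, add_smul]
        abel
      map_smul' := by
        intro t A
        simp only [hsmul, Matrix.smul_apply, smul_eq_mul, mul_smul, RingHom.id_apply, smul_add]
      map_lie' := by
        intro A B
        show ((⁅A,B⁆ : sl (Fin 2) K).val 0 0) • H + ((⁅A,B⁆ : sl (Fin 2) K).val 0 1) • E +
            ((⁅A,B⁆ : sl (Fin 2) K).val 1 0) • F =
          ⁅A.val 0 0 • H + A.val 0 1 • E + A.val 1 0 • F,
            B.val 0 0 • H + B.val 0 1 • E + B.val 1 0 • F⁆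
        simp only [sl_bracket, Matrix.sub_apply, Matrix.mul_apply, Fin.sum_univ_two]
        simp only [lie_add, add_lie, lie_smul, smul_lie, lie_self, hHE, hHF, hEF, hEH, hFH, hFE,
          smul_neg, smul_zero, add_zero, zero_add, smul_smul, tr_eq A, tr_eq B]
        module }
  have hφ : ∀ A : sl (Fin 2) K, φ A = A.val 0 0 • H + A.val 0 1 • E + A.val 1 0 • F := fun _ => rfl
  have hinj : Function.Injective φ := by
    intro A B hAB
    set C := A - B with hC
    have hC0 : φ C = 0 := by
      rw [show φ C = φ A - φ B from φ.toLinearMap.map_sub A B, hAB, sub_self]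
    have h0 : C.val 0 1 • E + C.val 0 0 • H + C.val 1 0 • F = 0 := by
      rw [hφ] at hC0; rw [← hC0]; abel
    obtain ⟨h1, h2, h3⟩ := hind _ _ _ h0
    have hC' : C = 0 := by
      apply Subtype.ext
      ext i j
      fin_cases i <;> fin_cases j
      · simpa using h2
      · simpa using h1
      · simpa using h3
      · simpa using (by rw [tr_eq C, h2, neg_zero] : C.val 1 1 = 0)
    rwa [hC, sub_eq_zero] at hC'
  refine ⟨φ.range, ?_, ⟨LieEquiv.ofInjective φ hinj⟩⟩
  apply le_antisymm
  · rintro x hx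
    rw [LieSubalgebra.mem_toSubmodule, LieHom.mem_range] at hx
    obtain ⟨A, rfl⟩ := hx
    rw [hφ]
    refine Submodule.add_mem _ (Submodule.add_mem _ ?_ ?_) ?_ <;>
      refine Submodule.smul_mem _ _ (Submodule.subset_span ?_) <;> simp
  · rw [Submodule.span_le]
    rintro x (rfl | rfl | rfl) <;>
      rw [SetLike.mem_coe, LieSubalgebra.mem_toSubmodule, LieHom.mem_range]
    · exact ⟨LieAlgebra.SpecialLinear.single 0 1 (by decide) (1 : K), by
        rw [hφ]; simp [Matrix.single_apply_same, Matrix.single_apply_of_ne]⟩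
    · refine ⟨⟨!![1,0;0,-1], mem_sl _ (by simp [Matrix.trace_fin_two])⟩, by rw [hφ]; simp⟩
    · exact ⟨LieAlgebra.SpecialLinear.single 1 0 (by decide) (1 : K), by
        rw [hφ]; simp [Matrix.single_apply_same, Matrix.single_apply_of_ne]⟩

end Aux

set_option maxHeartbeats 1600000 in
/-- In `W_3(K) = Der_K(K[x_1, x_2, x_3])`, with `K` of characteristic zero, the derivations
`E = -x₃ ∂/∂x₁ + (1 + 2x₂x₃) ∂/∂x₂ - x₃² ∂/∂x₃`, `H = ∂/∂x₁ - 2x₂ ∂/∂x₂ + 2x₃ ∂/∂x₃`,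
`F = ∂/∂x₃` satisfy `⁅H,E⁆ = 2E`, `⁅H,F⁆ = -2F`, `⁅E,F⁆ = H`; hence their `K`-span is a Lie
subalgebra isomorphic to `sl₂(K)`, and `{E, H, F}` is a basis of the free
`K[x_1, x_2, x_3]`-module `W_3(K)`. -/
theorem stmt18 (K : Type*) [Field K] [CharZero K]
    (E H F : Derivation K (MvPolynomial (Fin 3) K) (MvPolynomial (Fin 3) K))
    (hE : E = (-(X 2) : MvPolynomial (Fin 3) K) • pderiv 0 +
      ((1 + 2 * X 1 * X 2 : MvPolynomial (Fin 3) K)) • pderiv 1 +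
      (-(X 2 ^ 2) : MvPolynomial (Fin 3) K) • pderiv 2)
    (hH : H = pderiv 0 + ((-(2 * X 1) : MvPolynomial (Fin 3) K)) • pderiv 1 +
      ((2 * X 2 : MvPolynomial (Fin 3) K)) • pderiv 2)
    (hF : F = pderiv 2) :
    ⁅H, E⁆ = 2 • E ∧ ⁅H, F⁆ = (-2 : ℤ) • F ∧ ⁅E, F⁆ = H ∧
    (∃ S : LieSubalgebra K (Derivation K (MvPolynomial (Fin 3) K) (MvPolynomial (Fin 3) K)),
      S.toSubmodule = Submodule.span K {E, H, F} ∧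
      Nonempty ((LieAlgebra.SpecialLinear.sl (Fin 2) K) ≃ₗ⁅K⁆ S)) ∧
    (∃ B : Module.Basis (Fin 3) (MvPolynomial (Fin 3) K)
        (Derivation K (MvPolynomial (Fin 3) K) (MvPolynomial (Fin 3) K)),
      B 0 = E ∧ B 1 = H ∧ B 2 = F) := by
  have hH' : H = (1 : MvPolynomial (Fin 3) K) • pderiv 0 +
      ((-(2 * X 1) : MvPolynomial (Fin 3) K)) • pderiv 1 +
      ((2 * X 2 : MvPolynomial (Fin 3) K)) • pderiv 2 := by rw [hH, one_smul]
  have hF' : F = (0 : MvPolynomial (Fin 3) K) • pderiv 0 +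
      (0 : MvPolynomial (Fin 3) K) • pderiv 1 + (1 : MvPolynomial (Fin 3) K) • pderiv 2 := by
    rw [hF, zero_smul, zero_smul, one_smul, zero_add, zero_add]
  -- bracket relations, in `E + E` form
  have hHE2 : ⁅H, E⁆ = E + E := by
    apply MvPolynomial.derivation_ext
    intro i
    rw [Derivation.commutator_apply, Derivation.add_apply]
    fin_cases i <;>
      rw [hE, hH'] <;>
      simp only [fmk0, fmk1, fmk2, app3, p00, p01, p02, p10, p11, p12, p20, p21, p22, p2,
        map_add, map_neg, pderiv_mul, pderiv_pow, pderiv_one, smul_eq_mul, map_zero, mul_zero,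
        zero_mul] <;>
      ring
  have hHF2 : ⁅H, F⁆ = -(F + F) := by
    apply MvPolynomial.derivation_ext
    intro i
    rw [Derivation.commutator_apply, Derivation.neg_apply, Derivation.add_apply]
    fin_cases i <;>
      rw [hF', hH'] <;>
      simp only [fmk0, fmk1, fmk2, app3, p00, p01, p02, p10, p11, p12, p20, p21, p22, p2,
        map_add, map_neg, pderiv_mul, pderiv_pow, pderiv_one, smul_eq_mul, map_zero, mul_zero,
        zero_mul] <;>
      ring
  have hEF2 : ⁅E, F⁆ = H := by
    apply MvPolynomial.derivation_ext
    intro i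
    rw [Derivation.commutator_apply]
    fin_cases i <;>
      rw [hE, hF', hH'] <;>
      simp only [fmk0, fmk1, fmk2, app3, p00, p01, p02, p10, p11, p12, p20, p21, p22, p2,
        map_add, map_neg, pderiv_mul, pderiv_pow, pderiv_one, smul_eq_mul, map_zero, mul_zero,
        zero_mul] <;>
      ring
  -- the basis
  set B0 := Module.Basis.ofEquivFun (derivEquivFun K) with hB0
  have hdet : B0.det ![E, H, F] = -1 := by
    rw [Module.Basis.det_apply, Matrix.det_fin_three]
    simp only [Module.Basis.toMatrix_apply, hB0, Module.Basis.ofEquivFun_repr_apply,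
      Matrix.cons_val_zero, Matrix.cons_val_one, Matrix.head_cons, Matrix.cons_val_two,
      Matrix.tail_cons]
    simp only [derivEquivFun_apply]
    rw [hE, hH', hF']
    simp only [app3, p00, p01, p02, p10, p11, p12, p20, p21, p22]
    ring
  have hb := (Module.Basis.is_basis_iff_det B0).mpr (by rw [hdet]; exact isUnit_one.neg)
  have hBasis : ∃ B : Module.Basis (Fin 3) (MvPolynomial (Fin 3) K)
      (Derivation K (MvPolynomial (Fin 3) K) (MvPolynomial (Fin 3) K)),
      B 0 = E ∧ B 1 = H ∧ B 2 = F := by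
    refine ⟨Module.Basis.mk hb.1 hb.2.ge, ?_, ?_, ?_⟩ <;> simp [Module.Basis.coe_mk]
  -- K-linear independence
  have hind : ∀ a b c : K, a • E + b • H + c • F = 0 → a = 0 ∧ b = 0 ∧ c = 0 := by
    intro a b c h
    have hsm : ∀ (k : K) (D : Derivation K (MvPolynomial (Fin 3) K) (MvPolynomial (Fin 3) K)),
        k • D = (C k : MvPolynomial (Fin 3) K) • D := by
      intro k D
      exact (algebraMap_smul (MvPolynomial (Fin 3) K) k D).symm
    have h' : (C a : MvPolynomial (Fin 3) K) • E + (C b : MvPolynomial (Fin 3) K) • H +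
        (C c : MvPolynomial (Fin 3) K) • F = 0 := by
      rw [← hsm, ← hsm, ← hsm]; exact h
    have hli := Fintype.linearIndependent_iff.mp hb.1
      ![(C a : MvPolynomial (Fin 3) K), C b, C c]
      (by rw [Fin.sum_univ_three]; simpa using h')
    refine ⟨?_, ?_, ?_⟩
    · have := hli 0; simpa using this
    · have := hli 1; simpa using this
    · have := hli 2; simpa using this
  refine ⟨?_, ?_, hEF2, ?_, hBasis⟩
  · rw [hHE2, two_smul]
  · rw [hHF2, neg_smul, two_smul]
  · exact aux_sl2 E H F (by rw [hHE2, two_smul]) (by rw [hHF2, two_smul]) hEF2 hind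
end
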